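/- arXiv:1703.00416 — 2 statements merged into one kernel-verified Lean document; each statement's English description precedes it below -/
import Mathlib

section
/- The sequence c_d = 3^{1−2/(2d+1)} · (2d−1)^{1−2/(2d+1)} · (2d+1) · Γ(d−1/2)^{2−2/(2d+1)} / ( 2^{4−2/(2d+1)} · (d!)^{2−4/(2d+1)} ), indexed by integers d ≥ 1, converges to 3/(4e) as d → ∞. -/
open Filter Real

noncomputable def lsg (n : ℕ) : ℝ := Real.log (Stirling.stirlingSeq n)

lemma hlsg : Tendsto lsg atTop (nhds (Real.log (Real.sqrt Real.pi))) :=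
  ((Real.continuousAt_log (by positivity)).tendsto).comp Stirling.tendsto_stirlingSeq_sqrt_pi

lemma logFac (n : ℕ) (hn : 1 ≤ n) :
    Real.log (n.factorial) =
      (n : ℝ) * Real.log n - (n:ℝ) + (1/2) * Real.log (2*(n:ℝ)) + lsg n := by
  have hn' : (0:ℝ) < n := by exact_mod_cast hn
  have h := Stirling.log_stirlingSeq_formula n
  have h2 : Real.log ((n:ℝ) / Real.exp 1) = Real.log n - 1 := by
    rw [Real.log_div (ne_of_gt hn') (Real.exp_ne_zero 1), Real.log_exp]
  rw [lsg, h, h2]; ring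

lemma gammaEq (d : ℕ) (hd : 2 ≤ d) :
    Real.log (Real.Gamma ((d:ℝ) - 1/2)) =
      Real.log ((2*d-2).factorial) + (2 - 2*(d:ℝ)) * Real.log 2
        + Real.log (Real.sqrt Real.pi) - Real.log ((d-1).factorial) := by
  have hd1 : (1:ℕ) ≤ d := by omega
  have hr : (2:ℝ) ≤ (d:ℝ) := by exact_mod_cast hd
  have key := Real.Gamma_mul_Gamma_add_half ((d:ℝ) - 1/2)
  rw [show (d:ℝ)-1/2+1/2 = (d:ℝ) by ring, show 2*((d:ℝ)-1/2) = 2*(d:ℝ)-1 by ring,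
    show 1-(2*(d:ℝ)-1) = 2-2*(d:ℝ) by ring] at key
  have h1 : Real.Gamma ((d:ℝ)) = ((d-1).factorial : ℝ) := by
    rw [show ((d:ℝ)) = ((d-1:ℕ):ℝ) + 1 by push_cast [Nat.cast_sub hd1]; ring]
    exact Real.Gamma_nat_eq_factorial (d-1)
  have h2 : Real.Gamma (2*(d:ℝ)-1) = ((2*d-2).factorial : ℝ) := by
    rw [show (2*(d:ℝ)-1) = ((2*d-2:ℕ):ℝ) + 1 by push_cast [Nat.cast_sub (show 2 ≤ 2*d by omega)]; ring]
    exact Real.Gamma_nat_eq_factorial (2*d-2)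
  have hGpos : 0 < Real.Gamma ((d:ℝ)) := Real.Gamma_pos_of_pos (by linarith)
  have hG : Real.Gamma ((d:ℝ) - 1/2) =
      ((2*d-2).factorial : ℝ) * (2:ℝ)^(2-2*(d:ℝ)) * Real.sqrt Real.pi / ((d-1).factorial : ℝ) := by
    rw [← h1, ← h2, eq_div_iff (ne_of_gt hGpos)]
    exact key
  rw [hG]
  have f1 : ((2*d-2).factorial : ℝ) ≠ 0 := by positivity
  have f2 : ((d-1).factorial : ℝ) ≠ 0 := by positivity
  have f3 : (2:ℝ)^(2-2*(d:ℝ)) ≠ 0 := by positivity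
  have f4 : Real.sqrt Real.pi ≠ 0 := by positivity
  rw [Real.log_div (by positivity) f2, Real.log_mul (by positivity) f4,
    Real.log_mul f1 f3, Real.log_rpow two_pos]


noncomputable def E (d : ℕ) : ℝ :=
  (1 - 2/(2*(d:ℝ)+1)) * Real.log 3
  + (1 - 2/(2*(d:ℝ)+1)) * (Real.log (2*(d:ℝ)-1) - Real.log 2 - Real.log d)
  + (Real.log (2*(d:ℝ)+1) - Real.log 2 - Real.log d)
  + (2 - 2/(2*(d:ℝ)+1)) * (((d:ℝ)-1) * (Real.log ((d:ℝ)-1) - Real.log d))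
  + (2/(2*(d:ℝ)+1)/2) * Real.log d
  + (2/(2*(d:ℝ)+1)/2 - 2) * Real.log 2
  + (2 - 2/(2*(d:ℝ)+1)*((d:ℝ)+1))
  + (2 - 2/(2*(d:ℝ)+1)) * Real.log (Real.sqrt Real.pi)
  + (2 - 2/(2*(d:ℝ)+1)) * lsg (2*d-2)
  - (2 - 2/(2*(d:ℝ)+1)) * lsg (d-1)
  - (2 - 2*(2/(2*(d:ℝ)+1))) * lsg d

lemma logcEq (d : ℕ) (hd : 2 ≤ d) :
    Real.log ((3:ℝ) ^ (1 - 2/(2*(d:ℝ)+1)) * (2*(d:ℝ)-1) ^ (1 - 2/(2*(d:ℝ)+1)) * (2*(d:ℝ)+1) *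
      Real.Gamma ((d:ℝ)-1/2) ^ (2 - 2/(2*(d:ℝ)+1)) /
      ((2:ℝ) ^ (4 - 2/(2*(d:ℝ)+1)) * (d.factorial:ℝ) ^ (2 - 4/(2*(d:ℝ)+1)))) = E d := by
  have hr : (2:ℝ) ≤ (d:ℝ) := by exact_mod_cast hd
  have h0 : (0:ℝ) < d := by linarith
  have h2r1 : (0:ℝ) < 2*(d:ℝ)+1 := by linarith
  have h2rm1 : (0:ℝ) < 2*(d:ℝ)-1 := by linarith
  have hrm1 : (0:ℝ) < (d:ℝ)-1 := by linarith
  have hgam : 0 < Real.Gamma ((d:ℝ)-1/2) := Real.Gamma_pos_of_pos (by linarith)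
  have hfac : (0:ℝ) < (d.factorial:ℝ) := by positivity
  have hc1 : ((2*d-2 : ℕ):ℝ) = 2*(d:ℝ)-2 := by
    rw [Nat.cast_sub (by omega)]; push_cast; ring
  have hc2 : ((d-1 : ℕ):ℝ) = (d:ℝ)-1 := by
    rw [Nat.cast_sub (by omega)]; push_cast; ring
  rw [Real.log_div (by positivity) (by positivity),
    Real.log_mul (by positivity) (by positivity),
    Real.log_mul (by positivity) (by positivity),
    Real.log_mul (by positivity) (by positivity),
    Real.log_mul (by positivity) (by positivity),
    Real.log_rpow (by norm_num : (0:ℝ) < 3), Real.log_rpow h2rm1,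
    Real.log_rpow hgam, Real.log_rpow two_pos, Real.log_rpow hfac,
    gammaEq d hd, logFac (2*d-2) (by omega), logFac (d-1) (by omega), logFac d (by omega),
    hc1, hc2]
  rw [show 2*(2*(d:ℝ)-2) = 2*(2*((d:ℝ)-1)) by ring,
    show 2*(d:ℝ)-2 = 2*((d:ℝ)-1) by ring,
    Real.log_mul two_ne_zero (by positivity : (2*((d:ℝ)-1)) ≠ 0)]
  rw [Real.log_mul two_ne_zero (ne_of_gt hrm1), Real.log_mul two_ne_zero (ne_of_gt h0)]
  unfold E
  have hne : (2*(d:ℝ)+1) ≠ 0 := ne_of_gt h2r1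
  field_simp
  ring

lemma hden : Tendsto (fun d : ℕ => 2*(d:ℝ)+1) atTop atTop :=
  tendsto_atTop_add_const_right _ 1 (tendsto_natCast_atTop_atTop.const_mul_atTop two_pos)

lemma heps : Tendsto (fun d : ℕ => 2/(2*(d:ℝ)+1)) atTop (nhds 0) :=
  tendsto_const_nhds.div_atTop hden

lemma hlog_shift (c : ℝ) (hc : 0 < c) :
    Tendsto (fun d : ℕ => Real.log (1 + (-1)/(c*(d:ℝ)))) atTop (nhds 0) := by
  have hmul : Tendsto (fun d : ℕ => c*(d:ℝ)) atTop atTop :=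
    tendsto_natCast_atTop_atTop.const_mul_atTop hc
  have h1 : Tendsto (fun d : ℕ => 1 + (-1)/(c*(d:ℝ))) atTop (nhds (1 + 0)) :=
    tendsto_const_nhds.add (tendsto_const_nhds.div_atTop hmul)
  rw [add_zero] at h1
  have h2 := ((Real.continuousAt_log one_ne_zero).tendsto).comp h1
  rw [Real.log_one] at h2; exact h2

lemma hidx1 : Tendsto (fun d : ℕ => 2*d-2) atTop atTop :=
  tendsto_atTop_atTop.mpr (fun b => ⟨b+1, fun a ha => by omega⟩)

lemma hidx2 : Tendsto (fun d : ℕ => d-1) atTop atTop :=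
  tendsto_atTop_atTop.mpr (fun b => ⟨b+1, fun a ha => by omega⟩)

lemma hEtend : Tendsto E atTop (nhds (Real.log 3 - 2*Real.log 2 - 1)) := by
  have hT2i : Tendsto (fun d : ℕ =>
      Real.log (2*(d:ℝ)-1) - Real.log 2 - Real.log d) atTop (nhds 0) := by
    refine (hlog_shift 2 two_pos).congr' ?_
    filter_upwards [eventually_ge_atTop 1] with d hd
    have h1 : (1:ℝ) ≤ d := by exact_mod_cast hd
    have h0 : (0:ℝ) < d := by linarith
    rw [show 1 + (-1)/(2*(d:ℝ)) = (2*(d:ℝ)-1)/(2*(d:ℝ)) by field_simp; ring,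
      Real.log_div (ne_of_gt (by linarith : (0:ℝ) < 2*(d:ℝ)-1)) (by positivity),
      Real.log_mul two_ne_zero (ne_of_gt h0)]
    ring
  have hT3i : Tendsto (fun d : ℕ =>
      Real.log (2*(d:ℝ)+1) - Real.log 2 - Real.log d) atTop (nhds 0) := by
    have h1 : Tendsto (fun d : ℕ => 1 + 1/(2*(d:ℝ))) atTop (nhds (1 + 0)) :=
      tendsto_const_nhds.add (tendsto_const_nhds.div_atTop
        (tendsto_natCast_atTop_atTop.const_mul_atTop two_pos))
    rw [add_zero] at h1
    have h2 := ((Real.continuousAt_log one_ne_zero).tendsto).comp h1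
    simp only [Real.log_one] at h2
    refine h2.congr' ?_
    filter_upwards [eventually_ge_atTop 1] with d hd
    have h0 : (0:ℝ) < d := by exact_mod_cast hd
    show Real.log (1 + 1/(2*(d:ℝ))) = _
    rw [show 1 + 1/(2*(d:ℝ)) = (2*(d:ℝ)+1)/(2*(d:ℝ)) by field_simp,
      Real.log_div (by linarith : (2*(d:ℝ)+1) ≠ 0) (by positivity),
      Real.log_mul two_ne_zero (ne_of_gt h0)]
    ring
  have hT4i : Tendsto (fun d : ℕ =>
      ((d:ℝ)-1) * (Real.log ((d:ℝ)-1) - Real.log d)) atTop (nhds (-1 - 0)) := by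
    have b1 : Tendsto (fun d : ℕ => (d:ℝ) * Real.log (1 + (-1)/(d:ℝ))) atTop (nhds (-1)) := by
      have := (Real.tendsto_mul_log_one_add_div_atTop (-1)).comp
        (tendsto_natCast_atTop_atTop (R := ℝ))
      exact this
    have b2 : Tendsto (fun d : ℕ => Real.log (1 + (-1)/(d:ℝ))) atTop (nhds 0) := by
      have := hlog_shift 1 one_pos
      simpa using this
    refine (b1.sub b2).congr' ?_
    filter_upwards [eventually_ge_atTop 2] with d hd
    have hr : (2:ℝ) ≤ d := by exact_mod_cast hd
    have h0 : (0:ℝ) < d := by linarith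
    have key : Real.log ((d:ℝ)-1) - Real.log d = Real.log (1 + (-1)/(d:ℝ)) := by
      rw [show 1 + (-1)/(d:ℝ) = ((d:ℝ)-1)/(d:ℝ) by field_simp; ring,
        Real.log_div (ne_of_gt (by linarith : (0:ℝ) < (d:ℝ)-1)) (ne_of_gt h0)]
    show (d:ℝ) * Real.log (1 + (-1)/(d:ℝ)) - Real.log (1 + (-1)/(d:ℝ)) = _
    rw [key]; ring
  have hT5 : Tendsto (fun d : ℕ => (2/(2*(d:ℝ)+1)/2) * Real.log d) atTop (nhds 0) := by
    have hup : Tendsto (fun d : ℕ => Real.log (d:ℝ) / (d:ℝ)) atTop (nhds 0) :=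
      (Real.isLittleO_log_id_atTop.tendsto_div_nhds_zero).comp tendsto_natCast_atTop_atTop
    refine tendsto_of_tendsto_of_tendsto_of_le_of_le' tendsto_const_nhds hup ?_ ?_
    · filter_upwards [eventually_ge_atTop 1] with d hd
      have h1 : (1:ℝ) ≤ d := by exact_mod_cast hd
      have := Real.log_nonneg h1
      positivity
    · filter_upwards [eventually_ge_atTop 1] with d hd
      have h1 : (1:ℝ) ≤ d := by exact_mod_cast hd
      have h0 : (0:ℝ) < d := by linarith
      have hlog := Real.log_nonneg h1
      have : (2/(2*(d:ℝ)+1)/2) * Real.log d = Real.log d / (2*(d:ℝ)+1) := by ring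
      rw [this]
      exact div_le_div_of_nonneg_left hlog h0 (by linarith)
  have hT7i : Tendsto (fun d : ℕ => 2/(2*(d:ℝ)+1)*((d:ℝ)+1)) atTop (nhds (1+0)) := by
    have h1 : Tendsto (fun d : ℕ => 1 + 1/(2*(d:ℝ)+1)) atTop (nhds (1+0)) :=
      tendsto_const_nhds.add (tendsto_const_nhds.div_atTop hden)
    refine h1.congr ?_
    intro d
    have h2r1 : (0:ℝ) < 2*(d:ℝ)+1 := by positivity
    field_simp
    ring
  have hS1 : Tendsto (fun d : ℕ => lsg (2*d-2)) atTop (nhds (Real.log (Real.sqrt Real.pi))) :=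
    hlsg.comp hidx1
  have hS2 : Tendsto (fun d : ℕ => lsg (d-1)) atTop (nhds (Real.log (Real.sqrt Real.pi))) :=
    hlsg.comp hidx2
  have c1 : Tendsto (fun d : ℕ => (1 - 2/(2*(d:ℝ)+1))) atTop (nhds (1-0)) :=
    tendsto_const_nhds.sub heps
  have c2 : Tendsto (fun d : ℕ => (2 - 2/(2*(d:ℝ)+1))) atTop (nhds (2-0)) :=
    tendsto_const_nhds.sub heps
  have H := ((((((((((c1.mul_const (Real.log 3)).add (c1.mul hT2i)).add hT3i).add
    (c2.mul hT4i)).add hT5).add (((heps.div_const 2).sub_const 2).mul_const (Real.log 2))).add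
    ((tendsto_const_nhds (x := (2:ℝ))).sub hT7i)).add (c2.mul_const (Real.log (Real.sqrt Real.pi)))).add
    (c2.mul hS1)).sub (c2.mul hS2)).sub (((tendsto_const_nhds (x := (2:ℝ))).sub (heps.const_mul 2)).mul hlsg)
  have : Tendsto E atTop (nhds ((1-0)*Real.log 3 + (1-0)*0 + 0 + (2-0)*(-1-0) + 0 +
      (0/2-2)*Real.log 2 + (2-(1+0)) + (2-0)*Real.log (Real.sqrt Real.pi) +
      (2-0)*Real.log (Real.sqrt Real.pi) - (2-0)*Real.log (Real.sqrt Real.pi) -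
      (2-2*0)*Real.log (Real.sqrt Real.pi))) := by
    unfold E
    exact H
  convert this using 2
  ring

theorem stmt1 :
    Tendsto (fun d : ℕ =>
        (3 : ℝ) ^ (1 - 2 / (2 * (d : ℝ) + 1)) * (2 * (d : ℝ) - 1) ^ (1 - 2 / (2 * (d : ℝ) + 1)) *
            (2 * (d : ℝ) + 1) * Real.Gamma ((d : ℝ) - 1/2) ^ (2 - 2 / (2 * (d : ℝ) + 1)) /
          ((2 : ℝ) ^ (4 - 2 / (2 * (d : ℝ) + 1)) *
            (d.factorial : ℝ) ^ (2 - 4 / (2 * (d : ℝ) + 1))))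
      atTop (nhds (3 / (4 * Real.exp 1))) := by
  have hev : ∀ᶠ d : ℕ in atTop,
      (3 : ℝ) ^ (1 - 2 / (2 * (d : ℝ) + 1)) * (2 * (d : ℝ) - 1) ^ (1 - 2 / (2 * (d : ℝ) + 1)) *
            (2 * (d : ℝ) + 1) * Real.Gamma ((d : ℝ) - 1/2) ^ (2 - 2 / (2 * (d : ℝ) + 1)) /
          ((2 : ℝ) ^ (4 - 2 / (2 * (d : ℝ) + 1)) *
            (d.factorial : ℝ) ^ (2 - 4 / (2 * (d : ℝ) + 1))) = Real.exp (E d) := by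
    filter_upwards [eventually_ge_atTop 2] with d hd
    have hr : (2:ℝ) ≤ (d:ℝ) := by exact_mod_cast hd
    have hfpos : (0:ℝ) <
        (3 : ℝ) ^ (1 - 2 / (2 * (d : ℝ) + 1)) * (2 * (d : ℝ) - 1) ^ (1 - 2 / (2 * (d : ℝ) + 1)) *
            (2 * (d : ℝ) + 1) * Real.Gamma ((d : ℝ) - 1/2) ^ (2 - 2 / (2 * (d : ℝ) + 1)) /
          ((2 : ℝ) ^ (4 - 2 / (2 * (d : ℝ) + 1)) *
            (d.factorial : ℝ) ^ (2 - 4 / (2 * (d : ℝ) + 1))) :=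
      div_pos (mul_pos (mul_pos (mul_pos (Real.rpow_pos_of_pos three_pos _)
        (Real.rpow_pos_of_pos (by linarith) _)) (by linarith))
        (Real.rpow_pos_of_pos (Real.Gamma_pos_of_pos (by linarith)) _))
        (mul_pos (Real.rpow_pos_of_pos two_pos _) (Real.rpow_pos_of_pos (by positivity) _))
    rw [← logcEq d hd, Real.exp_log hfpos]
  have hexp : Tendsto (fun d : ℕ => Real.exp (E d)) atTop
      (nhds (Real.exp (Real.log 3 - 2*Real.log 2 - 1))) :=
    (Real.continuous_exp.tendsto _).comp hEtend
  have hval : Real.exp (Real.log 3 - 2*Real.log 2 - 1) = 3/(4*Real.exp 1) := by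
    rw [show (2:ℝ)*Real.log 2 = Real.log 4 by
        rw [show (4:ℝ) = 2^2 by norm_num, Real.log_pow]; push_cast; ring,
      Real.exp_sub, Real.exp_sub, Real.exp_log (by norm_num : (0:ℝ) < 3),
      Real.exp_log (by norm_num : (0:ℝ) < 4)]
    ring
  rw [← hval]
  exact hexp.congr' (EventuallyEq.symm hev)
end

section
/- Let d ≥ 0 be an integer and let x, y be unit vectors in ℂ^{d+1} with |⟨x,y⟩| < 1. Then (1/(4π²)) · ∫₀^{2π} ∫₀^{2π} ‖e^{iθ₁}·x − e^{iθ₂}·y‖^{−2} dθ₁ dθ₂ = 1 / ( 2·√(1 − |⟨x,y⟩|²) ). -/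
open Real intervalIntegral

lemma lemA (a b : ℝ) (ha : 0 < a) (hb : |b| < a) :
    ∫ θ in (0:ℝ)..(2*π), (a - b * Real.cos θ)⁻¹ = 2 * π / Real.sqrt (a^2 - b^2) := by
  have hb2 : b^2 < a^2 := by nlinarith [abs_nonneg b, sq_abs b]
  set k := Real.sqrt (a^2 - b^2) with hk
  have hk2 : k^2 = a^2 - b^2 := Real.sq_sqrt (by nlinarith)
  have hkpos : 0 < k := Real.sqrt_pos.2 (by nlinarith)
  have hpos : ∀ θ : ℝ, 0 < a - b * Real.cos θ := by
    intro θ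
    have h1 : b * Real.cos θ ≤ |b| := by
      calc b * Real.cos θ ≤ |b * Real.cos θ| := le_abs_self _
        _ = |b| * |Real.cos θ| := abs_mul _ _
        _ ≤ |b| * 1 := by gcongr; exact Real.abs_cos_le_one θ
        _ = |b| := mul_one _
    linarith
  have hcpos : ∀ θ : ℝ, 0 < a + k - b * Real.cos θ := fun θ => by
    have := hpos θ; linarith
  have hderiv : ∀ θ : ℝ, HasDerivAt
      (fun θ => (θ + 2 * Real.arctan (b * Real.sin θ / (a + k - b * Real.cos θ))) / k)
      ((a - b * Real.cos θ)⁻¹) θ := by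
    intro θ
    have hc0 : a + k - b * Real.cos θ ≠ 0 := (hcpos θ).ne'
    have h0 : a - b * Real.cos θ ≠ 0 := (hpos θ).ne'
    have hak : (0:ℝ) < a + k := by linarith
    have h1 : HasDerivAt (fun θ : ℝ => b * Real.sin θ) (b * Real.cos θ) θ :=
      (Real.hasDerivAt_sin θ).const_mul b
    have h2 : HasDerivAt (fun θ : ℝ => a + k - b * Real.cos θ) (b * Real.sin θ) θ := by
      simpa using ((Real.hasDerivAt_cos θ).const_mul b).const_sub (a + k)
    have h5 := ((hasDerivAt_id θ).add (((h1.div h2 hc0).arctan.const_mul (2:ℝ)))).div_const k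
    convert h5 using 1
    · rfl
    · rfl
    · rfl
    simp only [Pi.div_apply]
    set s := Real.sin θ with hsd
    set t := Real.cos θ with htd
    have hs : s^2 + t^2 = 1 := Real.sin_sq_add_cos_sq θ
    have e1 : 1 + (b*s/(a+k-b*t))^2 = (2*(a+k)*(a-b*t))/(a+k-b*t)^2 := by
      field_simp
      linear_combination b^2 * hs + hk2
    have e2 : (1:ℝ)/(1 + (b*s/(a+k-b*t))^2) = (a+k-b*t)^2/(2*(a+k)*(a-b*t)) := by
      rw [e1, one_div_div]
    rw [e2]
    have e4 : (a+k-b*t)^2/(2*(a+k)*(a-b*t)) * ((b*t*(a+k-b*t) - b*s*(b*s))/(a+k-b*t)^2)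
        = (b*t*(a+k-b*t) - b*s*(b*s))/(2*(a+k)*(a-b*t)) := by
      rw [div_mul_div_comm]
      rw [mul_comm ((a+k-b*t)^2), mul_div_mul_right _ _ (pow_ne_zero 2 hc0)]
    rw [e4]
    have e5 : (a+k)*(a-b*t) + (b*t*(a+k-b*t) - b*s*(b*s)) = k*(a+k) := by
      linear_combination (-b^2) * hs - hk2
    rw [eq_comm, div_eq_iff hkpos.ne']
    field_simp
    linear_combination 2 * e5 + b^2 * hs + hk2
  have hint : IntervalIntegrable (fun θ => (a - b * Real.cos θ)⁻¹) MeasureTheory.volume 0 (2*π) := by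
    apply Continuous.intervalIntegrable
    exact (continuous_const.sub (continuous_const.mul Real.continuous_cos)).inv₀ (fun θ => (hpos θ).ne')
  rw [integral_eq_sub_of_hasDerivAt (fun θ _ => hderiv θ) hint]
  simp only [Real.sin_two_pi, Real.cos_two_pi, Real.sin_zero, Real.cos_zero, zero_mul, mul_zero,
    zero_div, Real.arctan_zero, mul_zero, add_zero, zero_add]
  ring

lemma lemB (w : ℂ) (hw : ‖w‖ < 1) :
    ∫ θ in (0:ℝ)..(2*π), (2 - 2 * (w * Complex.exp (θ * Complex.I)).re)⁻¹
      = π / Real.sqrt (1 - ‖w‖ ^ 2) := by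
  set r := ‖w‖ with hr
  have hr0 : 0 ≤ r := norm_nonneg w
  have hre : ∀ θ : ℝ, (w * Complex.exp (θ * Complex.I)).re = r * Real.cos (θ + w.arg) := by
    intro θ
    conv_lhs => rw [← Complex.norm_mul_exp_arg_mul_I w]
    rw [mul_assoc, ← Complex.exp_add]
    have : (w.arg : ℂ) * Complex.I + θ * Complex.I = ((θ + w.arg : ℝ) : ℂ) * Complex.I := by
      push_cast; ring
    rw [this, Complex.exp_mul_I, ← Complex.ofReal_cos, ← Complex.ofReal_sin]
    simp only [Complex.mul_re, Complex.ofReal_re, Complex.ofReal_im, Complex.add_re,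
      Complex.add_im, Complex.mul_im, Complex.I_re, Complex.I_im]
    ring
  have key : (∫ θ in (0:ℝ)..(2*π), (2 - 2 * (w * Complex.exp (θ * Complex.I)).re)⁻¹)
      = ∫ θ in (0:ℝ)..(2*π), (2 - 2 * r * Real.cos θ)⁻¹ := by
    have h1 : (∫ θ in (0:ℝ)..(2*π), (2 - 2 * (w * Complex.exp (θ * Complex.I)).re)⁻¹)
        = ∫ θ in (0:ℝ)..(2*π), (fun θ => (2 - 2 * r * Real.cos θ)⁻¹) (θ + w.arg) := by
      apply intervalIntegral.integral_congr
      intro θ _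
      simp only [hre θ]
      ring_nf
    rw [h1, intervalIntegral.integral_comp_add_right (fun θ => (2 - 2 * r * Real.cos θ)⁻¹) w.arg]
    have hper : Function.Periodic (fun θ => (2 - 2 * r * Real.cos θ)⁻¹) (2*π) := by
      intro θ; simp [Real.cos_add_two_pi]
    have := hper.intervalIntegral_add_eq w.arg 0
    simpa [zero_add, add_comm] using this
  rw [key]
  have habs : |2 * r| < 2 := by
    rw [abs_of_nonneg (by linarith)]; linarith
  have := lemA 2 (2*r) two_pos habs
  have h2 : (∫ θ in (0:ℝ)..(2*π), (2 - 2 * r * Real.cos θ)⁻¹)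
      = ∫ θ in (0:ℝ)..(2*π), (2 - 2 * r * Real.cos θ)⁻¹ := rfl
  calc (∫ θ in (0:ℝ)..(2*π), (2 - 2 * r * Real.cos θ)⁻¹)
      = ∫ θ in (0:ℝ)..(2*π), (2 - (2*r) * Real.cos θ)⁻¹ := by ring_nf
    _ = 2 * π / Real.sqrt (2^2 - (2*r)^2) := this
    _ = π / Real.sqrt (1 - r ^ 2) := by
        have h4 : Real.sqrt (2^2 - (2*r)^2) = 2 * Real.sqrt (1 - r^2) := by
          rw [show (2:ℝ)^2 - (2*r)^2 = 2^2 * (1-r^2) by ring,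
            Real.sqrt_mul (by positivity), Real.sqrt_sq (by norm_num : (0:ℝ) ≤ 2)]
        have h5 : 0 < Real.sqrt (1 - r^2) := Real.sqrt_pos.2 (by nlinarith)
        rw [h4]
        field_simp


open scoped InnerProductSpace

theorem stmt9 (d : ℕ) (x y : EuclideanSpace ℂ (Fin (d + 1)))
    (hx : ‖x‖ = 1) (hy : ‖y‖ = 1) (hxy : ‖⟪x, y⟫_ℂ‖ < 1) :
    (1 / (4 * Real.pi ^ 2)) *
        ∫ θ₁ in (0 : ℝ)..(2 * Real.pi), ∫ θ₂ in (0 : ℝ)..(2 * Real.pi),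
          1 / ‖Complex.exp (θ₁ * Complex.I) • x - Complex.exp (θ₂ * Complex.I) • y‖ ^ 2
      = 1 / (2 * Real.sqrt (1 - ‖⟪x, y⟫_ℂ‖ ^ 2)) := by
  set c := (⟪x, y⟫_ℂ) with hc
  have key : ∀ θ₁ : ℝ, (∫ θ₂ in (0:ℝ)..(2*Real.pi),
      1 / ‖Complex.exp (θ₁ * Complex.I) • x - Complex.exp (θ₂ * Complex.I) • y‖ ^ 2)
      = Real.pi / Real.sqrt (1 - ‖c‖ ^ 2) := by
    intro θ₁
    set w := (starRingEnd ℂ) (Complex.exp (θ₁ * Complex.I)) * c with hw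
    have hwabs : ‖w‖ < 1 := by
      rw [hw, norm_mul, Complex.norm_conj, Complex.norm_exp_ofReal_mul_I, one_mul]
      exact hxy
    have heq : ∀ θ₂ : ℝ, ‖Complex.exp (θ₁ * Complex.I) • x - Complex.exp (θ₂ * Complex.I) • y‖ ^ 2
        = 2 - 2 * (w * Complex.exp (θ₂ * Complex.I)).re := by
      intro θ₂
      rw [norm_sub_sq (𝕜 := ℂ), norm_smul, norm_smul, inner_smul_left, inner_smul_right]
      simp only [Complex.norm_exp_ofReal_mul_I, one_mul, hx, hy, ← hc]
      rw [hw]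
      norm_num
      ring
    have h1 : (∫ θ₂ in (0:ℝ)..(2*Real.pi),
        1 / ‖Complex.exp (θ₁ * Complex.I) • x - Complex.exp (θ₂ * Complex.I) • y‖ ^ 2)
        = ∫ θ₂ in (0:ℝ)..(2*Real.pi), (2 - 2 * (w * Complex.exp (θ₂ * Complex.I)).re)⁻¹ := by
      apply intervalIntegral.integral_congr
      intro θ₂ _
      simp only [heq, one_div]
    rw [h1, lemB w hwabs]
    congr 2
    rw [hw, norm_mul, Complex.norm_conj, Complex.norm_exp_ofReal_mul_I, one_mul]
  have houter : (∫ θ₁ in (0 : ℝ)..(2 * Real.pi), ∫ θ₂ in (0 : ℝ)..(2 * Real.pi),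
      1 / ‖Complex.exp (θ₁ * Complex.I) • x - Complex.exp (θ₂ * Complex.I) • y‖ ^ 2)
      = (2 * Real.pi) * (Real.pi / Real.sqrt (1 - ‖c‖ ^ 2)) := by
    rw [intervalIntegral.integral_congr (fun θ₁ _ => key θ₁)]
    rw [intervalIntegral.integral_const]
    simp [smul_eq_mul]
  rw [houter]
  have hs : 0 < Real.sqrt (1 - ‖c‖ ^ 2) := by
    apply Real.sqrt_pos.2
    nlinarith [norm_nonneg c]
  field_simp
  ring
end
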